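/- arXiv:1711.07133 — 2 statements merged into one kernel-verified Lean document; each statement's English description precedes it below -/
import Mathlib

section
/- Let λ : [0,∞) → [0,∞) be continuous with cumulative hazard Λ(t) = ∫_0^t λ(s) ds, and let τ be a nonnegative random variable on a probability space (Ω, F, P) with survival function P(τ > t) = exp(−Λ(t)) for all t ≥ 0. Let D_t = 1_{τ ≤ t} be the default indicator process and (H_t) its natural filtration. Then the compensated default process M_t = D_t − ∫_0^t 1_{s < τ} λ(s) ds = D_t − ∫_0^{min(t,τ)} λ(s) ds is a martingale with respect to (H_t). -/
open MeasureTheory Filter Set intervalIntegral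
open scoped NNReal

namespace CompensatedDefaultAux

noncomputable def cumHaz (lamE : ℝ → ℝ) (x : ℝ) : ℝ := ∫ s in (0:ℝ)..x, lamE s

variable {lamE : ℝ → ℝ}

lemma cumHaz_hasDerivAt (hc : Continuous lamE) (x : ℝ) :
    HasDerivAt (cumHaz lamE) (lamE x) x :=
  intervalIntegral.integral_hasDerivAt_right (hc.intervalIntegrable _ _)
    (hc.stronglyMeasurable.stronglyMeasurableAtFilter) hc.continuousAt

lemma cumHaz_continuous (hc : Continuous lamE) : Continuous (cumHaz lamE) :=
  continuous_iff_continuousAt.mpr fun x =>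
    (cumHaz_hasDerivAt hc x).differentiableAt.continuousAt

lemma cumHaz_zero : cumHaz lamE 0 = 0 := intervalIntegral.integral_same

lemma cumHaz_mono (hc : Continuous lamE) (h0 : ∀ s, 0 ≤ lamE s) :
    Monotone (cumHaz lamE) := by
  intro a b hab
  have hdiff : cumHaz lamE b - cumHaz lamE a = ∫ s in a..b, lamE s :=
    intervalIntegral.integral_interval_sub_left (hc.intervalIntegrable _ _)
      (hc.intervalIntegrable _ _)
  have hnn : 0 ≤ ∫ s in a..b, lamE s :=
    intervalIntegral.integral_nonneg hab fun s _ => h0 s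
  linarith

lemma ftc_exp (hc : Continuous lamE) (a b : ℝ) :
    ∫ u in a..b, lamE u * Real.exp (-(cumHaz lamE u)) =
      Real.exp (-(cumHaz lamE a)) - Real.exp (-(cumHaz lamE b)) := by
  have hderiv : ∀ x ∈ uIcc a b, HasDerivAt (fun y => -Real.exp (-(cumHaz lamE y)))
      (lamE x * Real.exp (-(cumHaz lamE x))) x := by
    intro x _
    have h1 : HasDerivAt (fun y => -(cumHaz lamE y)) (-(lamE x)) x :=
      (cumHaz_hasDerivAt hc x).neg
    have h2 := h1.exp
    have h3 : HasDerivAt (fun y => -Real.exp (-(cumHaz lamE y)))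
        (-(Real.exp (-(cumHaz lamE x)) * -(lamE x))) x := h2.neg
    convert h3 using 1
    ring
  have hint : IntervalIntegrable (fun u => lamE u * Real.exp (-(cumHaz lamE u)))
      MeasureTheory.volume a b :=
    (hc.mul ((cumHaz_continuous hc).neg.rexp)).intervalIntegrable _ _
  rw [intervalIntegral.integral_eq_sub_of_hasDerivAt hderiv hint]
  ring

section Prob

variable {Ω : Type*} [MeasurableSpace Ω] (μ : Measure Ω) [IsProbabilityMeasure μ]
variable {τ : Ω → ℝ}

lemma integrable_ind (hτ : Measurable τ) (t : ℝ) :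
    Integrable (fun ω => if τ ω ≤ t then (1:ℝ) else 0) μ := by
  have h : (fun ω => if τ ω ≤ t then (1:ℝ) else 0) =
      ({ω | τ ω ≤ t} : Set Ω).indicator (fun _ => (1:ℝ)) := by
    funext ω
    by_cases h : τ ω ≤ t <;> simp [Set.indicator, h]
  rw [h]
  exact (integrable_const (1:ℝ)).indicator (measurableSet_le hτ measurable_const)

lemma integral_ind (hτ : Measurable τ)
    (hsurv : ∀ t : ℝ, 0 ≤ t → μ {ω | t < τ ω} = ENNReal.ofReal (Real.exp (-(cumHaz lamE t))))
    (hc : Continuous lamE) (h0 : ∀ s, 0 ≤ lamE s) (t : ℝ) (ht : 0 ≤ t) :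
    ∫ ω, (if τ ω ≤ t then (1:ℝ) else 0) ∂μ = 1 - Real.exp (-(cumHaz lamE t)) := by
  have h : (fun ω => if τ ω ≤ t then (1:ℝ) else 0) =
      ({ω | τ ω ≤ t} : Set Ω).indicator (fun _ => (1:ℝ)) := by
    funext ω
    by_cases h : τ ω ≤ t <;> simp [Set.indicator, h]
  have hS : MeasurableSet {ω | τ ω ≤ t} := measurableSet_le hτ measurable_const
  rw [h, MeasureTheory.integral_indicator_const (1:ℝ) hS]
  have hS' : MeasurableSet {ω | t < τ ω} := measurableSet_lt measurable_const hτ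
  have hcompl : {ω | t < τ ω}ᶜ = {ω | τ ω ≤ t} := by
    ext ω; simp [not_lt]
  have hμS : μ {ω | τ ω ≤ t} = 1 - ENNReal.ofReal (Real.exp (-(cumHaz lamE t))) := by
    rw [← hcompl, prob_compl_eq_one_sub hS', hsurv t ht]
  have hcum : 0 ≤ cumHaz lamE t := by
    rw [← cumHaz_zero (lamE := lamE)]
    exact cumHaz_mono hc h0 ht
  have hexp_le : Real.exp (-(cumHaz lamE t)) ≤ 1 :=
    Real.exp_le_one_iff.mpr (neg_nonpos.mpr hcum)
  rw [measureReal_def, hμS, ENNReal.toReal_sub_of_le (ENNReal.ofReal_le_one.mpr hexp_le) ENNReal.one_ne_top]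
  rw [ENNReal.toReal_one, ENNReal.toReal_ofReal (Real.exp_pos _).le]
  simp


lemma integrable_cumHaz_min (hc : Continuous lamE) (h0 : ∀ s, 0 ≤ lamE s)
    (hτ : Measurable τ) (hτ0 : ∀ ω, 0 ≤ τ ω) (t : ℝ) (ht : 0 ≤ t) :
    Integrable (fun ω => cumHaz lamE (min t (τ ω))) μ := by
  have hmeas : Measurable (fun ω => cumHaz lamE (min t (τ ω))) :=
    (cumHaz_continuous hc).measurable.comp (measurable_const.min hτ)
  refine Integrable.mono' (integrable_const (cumHaz lamE t)) hmeas.aestronglyMeasurable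
    (Filter.Eventually.of_forall fun ω => ?_)
  have h1 : 0 ≤ cumHaz lamE (min t (τ ω)) := by
    rw [← cumHaz_zero (lamE := lamE)]
    exact cumHaz_mono hc h0 (le_min ht (hτ0 ω))
  have h2 : cumHaz lamE (min t (τ ω)) ≤ cumHaz lamE t :=
    cumHaz_mono hc h0 (min_le_left _ _)
  rw [Real.norm_of_nonneg h1]
  exact h2

lemma integral_cumHaz_min (hc : Continuous lamE) (h0 : ∀ s, 0 ≤ lamE s)
    (hτ : Measurable τ) (hτ0 : ∀ ω, 0 ≤ τ ω)
    (hsurv : ∀ t : ℝ, 0 ≤ t → μ {ω | t < τ ω} = ENNReal.ofReal (Real.exp (-(cumHaz lamE t))))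
    (t : ℝ) (ht : 0 ≤ t) :
    ∫ ω, cumHaz lamE (min t (τ ω)) ∂μ = 1 - Real.exp (-(cumHaz lamE t)) := by
  have hmeas : Measurable (fun ω => cumHaz lamE (min t (τ ω))) :=
    (cumHaz_continuous hc).measurable.comp (measurable_const.min hτ)
  have hnn : ∀ ω, 0 ≤ cumHaz lamE (min t (τ ω)) := fun ω => by
    rw [← cumHaz_zero (lamE := lamE)]
    exact cumHaz_mono hc h0 (le_min ht (hτ0 ω))
  -- step 1 : pass to lintegral
  rw [MeasureTheory.integral_eq_lintegral_of_nonneg_ae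
    (Filter.Eventually.of_forall hnn) hmeas.aestronglyMeasurable]
  -- step 2 : rewrite pointwise as a lintegral over (0, t]
  have hpt : ∀ ω, ENNReal.ofReal (cumHaz lamE (min t (τ ω))) =
      ∫⁻ u in Ioc 0 t, ENNReal.ofReal ((Iio (τ ω)).indicator lamE u) := by
    intro ω
    have hreal : cumHaz lamE (min t (τ ω)) =
        ∫ u in Ioc 0 t, (Iio (τ ω)).indicator lamE u := by
      rw [MeasureTheory.setIntegral_indicator measurableSet_Iio]
      by_cases h : τ ω ≤ t
      · have hset : Ioc 0 t ∩ Iio (τ ω) = Ioo 0 (τ ω) := by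
          ext u
          simp only [mem_inter_iff, mem_Ioc, mem_Iio, mem_Ioo]
          constructor
          · rintro ⟨⟨h1, _⟩, h3⟩; exact ⟨h1, h3⟩
          · rintro ⟨h1, h3⟩; exact ⟨⟨h1, h3.le.trans h⟩, h3⟩
        rw [hset, ← MeasureTheory.integral_Ioc_eq_integral_Ioo,
          ← intervalIntegral.integral_of_le (hτ0 ω), min_eq_right h]
        rfl
      · have hset : Ioc 0 t ∩ Iio (τ ω) = Ioc 0 t := by
          apply inter_eq_left.mpr
          intro u hu
          exact lt_of_le_of_lt hu.2 (not_le.mp h)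
        rw [hset, ← intervalIntegral.integral_of_le ht, min_eq_left (not_le.mp h).le]
        rfl
    rw [hreal]
    refine MeasureTheory.ofReal_integral_eq_lintegral_ofReal ?_ ?_
    · exact (hc.integrableOn_Ioc).indicator measurableSet_Iio
    · exact Filter.Eventually.of_forall fun u => Set.indicator_nonneg (fun x _ => h0 x) u
  simp only [hpt]
  -- step 3 : swap the integrals (Tonelli)
  have hset2 : MeasurableSet {p : Ω × ℝ | p.2 < τ p.1} :=
    measurableSet_lt measurable_snd (hτ.comp measurable_fst)
  have huncurry : (Function.uncurry fun (ω : Ω) (u : ℝ) =>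
      ENNReal.ofReal ((Iio (τ ω)).indicator lamE u)) =
      ({p : Ω × ℝ | p.2 < τ p.1}).indicator (fun q => ENNReal.ofReal (lamE q.2)) := by
    funext p
    by_cases h : p.2 < τ p.1 <;>
      simp [Function.uncurry, Set.indicator, h]
  have hswapmeas : AEMeasurable (Function.uncurry fun (ω : Ω) (u : ℝ) =>
      ENNReal.ofReal ((Iio (τ ω)).indicator lamE u))
      (μ.prod (MeasureTheory.volume.restrict (Ioc 0 t))) := by
    rw [huncurry]
    exact ((ENNReal.measurable_ofReal.comp (hc.measurable.comp
      measurable_snd)).indicator hset2).aemeasurable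
  rw [MeasureTheory.lintegral_lintegral_swap hswapmeas]
  -- step 4 : compute the inner integral
  have hinner : ∀ u : ℝ, (∫⁻ ω, ENNReal.ofReal ((Iio (τ ω)).indicator lamE u) ∂μ) =
      ENNReal.ofReal (lamE u) * μ {ω | u < τ ω} := by
    intro u
    have h2 : (fun ω => ENNReal.ofReal ((Iio (τ ω)).indicator lamE u)) =
        ({ω | u < τ ω}).indicator (fun _ => ENNReal.ofReal (lamE u)) := by
      funext ω
      by_cases h : u < τ ω <;> simp [Set.indicator, h]
    rw [h2, MeasureTheory.lintegral_indicator (measurableSet_lt measurable_const hτ),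
      MeasureTheory.setLIntegral_const]
  -- step 5 : plug in the survival function
  have hcongr : (∫⁻ u in Ioc 0 t, ∫⁻ ω, ENNReal.ofReal ((Iio (τ ω)).indicator lamE u) ∂μ) =
      ∫⁻ u in Ioc 0 t, ENNReal.ofReal (lamE u * Real.exp (-(cumHaz lamE u))) := by
    refine MeasureTheory.setLIntegral_congr_fun measurableSet_Ioc
      (fun u hu => ?_)
    rw [hinner u, hsurv u hu.1.le, ← ENNReal.ofReal_mul (h0 u)]
  rw [hcongr]
  -- step 6 : back to a real integral and FTC
  have hint6 : IntegrableOn (fun u => lamE u * Real.exp (-(cumHaz lamE u))) (Ioc 0 t)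
      MeasureTheory.volume :=
    (hc.mul ((cumHaz_continuous hc).neg.rexp)).integrableOn_Ioc
  rw [← MeasureTheory.ofReal_integral_eq_lintegral_ofReal hint6
    (Filter.Eventually.of_forall fun u => mul_nonneg (h0 u) (Real.exp_pos _).le)]
  have h7 : (∫ u in Ioc 0 t, lamE u * Real.exp (-(cumHaz lamE u))) =
      1 - Real.exp (-(cumHaz lamE t)) := by
    rw [← intervalIntegral.integral_of_le ht, ftc_exp hc, cumHaz_zero]
    simp
  rw [h7, ENNReal.toReal_ofReal]
  have hcum : 0 ≤ cumHaz lamE t := by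
    rw [← cumHaz_zero (lamE := lamE)]
    exact cumHaz_mono hc h0 ht
  have := Real.exp_le_one_iff.mpr (neg_nonpos.mpr hcum)
  linarith

lemma mean_zero (hc : Continuous lamE) (h0 : ∀ s, 0 ≤ lamE s)
    (hτ : Measurable τ) (hτ0 : ∀ ω, 0 ≤ τ ω)
    (hsurv : ∀ t : ℝ, 0 ≤ t → μ {ω | t < τ ω} = ENNReal.ofReal (Real.exp (-(cumHaz lamE t))))
    (t : ℝ) (ht : 0 ≤ t) :
    ∫ ω, ((if τ ω ≤ t then (1:ℝ) else 0) - cumHaz lamE (min t (τ ω))) ∂μ = 0 := by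
  rw [MeasureTheory.integral_sub (integrable_ind μ hτ t)
    (integrable_cumHaz_min μ hc h0 hτ hτ0 t ht),
    integral_ind μ hτ hsurv hc h0 t ht, integral_cumHaz_min μ hc h0 hτ hτ0 hsurv t ht]
  ring

end Prob

end CompensatedDefaultAux

open CompensatedDefaultAux

/-- In a reduced-form credit model, let `lam : [0,∞) → [0,∞)` be a
continuous hazard rate with cumulative hazard `Λ t = ∫_0^t lam s ds`, and let `τ ≥ 0`
have survival function `P(τ > t) = exp(-Λ t)` for `t ≥ 0`. Let `D t = 1_{τ ≤ t}` be
the default indicator process and `(H_t)` its natural filtration. Then the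
compensated default process `M t = D t - ∫_0^{min(t,τ)} lam s ds` is a martingale
with respect to `(H_t)`. -/
theorem compensated_default_process_martingale
    {Ω : Type*} [MeasurableSpace Ω] (μ : Measure Ω) [IsProbabilityMeasure μ]
    (lam : ℝ → ℝ)
    (hlam_cont : ContinuousOn lam (Set.Ici (0:ℝ)))
    (hlam_nonneg : ∀ s : ℝ, 0 ≤ s → 0 ≤ lam s)
    (τ : Ω → ℝ) (hτ_meas : Measurable τ) (hτ_nonneg : ∀ ω, 0 ≤ τ ω)
    (hsurv : ∀ t : ℝ, 0 ≤ t →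
      μ {ω | t < τ ω} = ENNReal.ofReal (Real.exp (-∫ s in (0:ℝ)..t, lam s)))
    (D : ℝ≥0 → Ω → ℝ)
    (hD : ∀ (t : ℝ≥0) (ω : Ω), D t ω = if τ ω ≤ (t : ℝ) then 1 else 0)
    (hD_meas : ∀ t : ℝ≥0, StronglyMeasurable (D t))
    (M : ℝ≥0 → Ω → ℝ)
    (hM : ∀ (t : ℝ≥0) (ω : Ω),
      M t ω = D t ω - ∫ s in (0:ℝ)..(min (t : ℝ) (τ ω)), lam s) :
    Martingale M (Filtration.natural D hD_meas) μ := by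
  classical
  set lamE : ℝ → ℝ := fun x => lam (max x 0) with hlamE_def
  have hcE : Continuous lamE :=
    hlam_cont.comp_continuous (continuous_id.max continuous_const)
      (fun x => Set.mem_Ici.mpr (le_max_right _ _))
  have h0E : ∀ s, 0 ≤ lamE s := fun s => hlam_nonneg _ (le_max_right _ _)
  have hagree : ∀ x : ℝ, 0 ≤ x → (∫ s in (0:ℝ)..x, lam s) = cumHaz lamE x := by
    intro x hx
    apply intervalIntegral.integral_congr
    intro y hy
    rw [Set.uIcc_of_le hx] at hy
    simp only [hlamE_def]
    rw [max_eq_left hy.1]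
  have hsurvE : ∀ t : ℝ, 0 ≤ t →
      μ {ω | t < τ ω} = ENNReal.ofReal (Real.exp (-(cumHaz lamE t))) := by
    intro t ht
    rw [hsurv t ht, hagree t ht]
  have hMalt : ∀ (t : ℝ≥0) (ω : Ω),
      M t ω = (if τ ω ≤ (t:ℝ) then (1:ℝ) else 0) - cumHaz lamE (min (t:ℝ) (τ ω)) := by
    intro t ω
    rw [hM, hD, hagree _ (le_min t.coe_nonneg (hτ_nonneg ω))]
  set ℱ := Filtration.natural D hD_meas with hℱ
  -- integrability
  have hint : ∀ t : ℝ≥0, Integrable (M t) μ := by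
    intro t
    have : M t = fun ω => (if τ ω ≤ (t:ℝ) then (1:ℝ) else 0) -
        cumHaz lamE (min (t:ℝ) (τ ω)) := funext fun ω => hMalt t ω
    rw [this]
    exact (integrable_ind μ hτ_meas _).sub
      (integrable_cumHaz_min μ hcE h0E hτ_meas hτ_nonneg _ t.coe_nonneg)
  -- mean zero
  have hmean : ∀ t : ℝ≥0, ∫ ω, M t ω ∂μ = 0 := by
    intro t
    simp only [hMalt]
    exact mean_zero μ hcE h0E hτ_meas hτ_nonneg hsurvE _ t.coe_nonneg
  -- generating sets of the natural filtration
  have hgenset : ∀ s u : ℝ≥0, u ≤ s → MeasurableSet[ℱ s] {ω | τ ω ≤ (u:ℝ)} := by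
    intro s u hu
    have hpre : {ω | τ ω ≤ (u:ℝ)} = D u ⁻¹' {1} := by
      ext ω
      by_cases h : τ ω ≤ (u:ℝ) <;> simp [hD, h]
    have h1 : MeasurableSet[MeasurableSpace.comap (D u) inferInstance]
        {ω | τ ω ≤ (u:ℝ)} := ⟨{1}, measurableSet_singleton _, hpre.symm⟩
    exact (le_iSup₂ (f := fun (j : ℝ≥0) (_ : j ≤ s) =>
      MeasurableSpace.comap (D j) inferInstance) u hu) _ h1
  have hgen : ∀ s : ℝ≥0, (ℱ s : MeasurableSpace Ω) = MeasurableSpace.generateFrom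
      {A : Set Ω | ∃ u : ℝ≥0, u ≤ s ∧ A = {ω | τ ω ≤ (u:ℝ)}} := by
    intro s
    apply le_antisymm
    · apply iSup₂_le
      intro u hu
      rw [← measurable_iff_comap_le]
      have hDu : D u = Set.indicator {ω | τ ω ≤ (u:ℝ)} (fun _ => (1:ℝ)) := by
        funext ω
        by_cases h : τ ω ≤ (u:ℝ) <;> simp [hD, Set.indicator, h]
      rw [hDu]
      exact measurable_const.indicator
        (MeasurableSpace.measurableSet_generateFrom ⟨u, hu, rfl⟩)
    · apply MeasurableSpace.generateFrom_le
      rintro A ⟨u, hu, rfl⟩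
      exact hgenset s u hu
  have hπ : ∀ s : ℝ≥0, IsPiSystem
      {A : Set Ω | ∃ u : ℝ≥0, u ≤ s ∧ A = {ω | τ ω ≤ (u:ℝ)}} := by
    intro s
    rintro A ⟨u, hu, rfl⟩ B ⟨v, hv, rfl⟩ -
    refine ⟨min u v, le_trans (min_le_left _ _) hu, ?_⟩
    ext ω
    simp [le_min_iff]
  -- adaptedness
  have hadapted : ∀ s : ℝ≥0, StronglyMeasurable[ℱ s] (M s) := by
    intro s
    have hMs : M s = fun ω => (if τ ω ≤ (s:ℝ) then (1:ℝ) else 0) -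
        cumHaz lamE (min (s:ℝ) (τ ω)) := funext fun ω => hMalt s ω
    rw [hMs]
    have hind : StronglyMeasurable[ℱ s] (fun ω => if τ ω ≤ (s:ℝ) then (1:ℝ) else 0) := by
      have : (fun ω => if τ ω ≤ (s:ℝ) then (1:ℝ) else 0) =
          Set.indicator {ω | τ ω ≤ (s:ℝ)} (fun _ => (1:ℝ)) := by
        funext ω
        by_cases h : τ ω ≤ (s:ℝ) <;> simp [Set.indicator, h]
      rw [this]
      exact (measurable_const.indicator (hgenset s s le_rfl)).stronglyMeasurable
    have hmin : Measurable[ℱ s] (fun ω => min (s:ℝ) (τ ω)) := by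
      apply measurable_of_Iic
      intro x
      by_cases hx : (s:ℝ) ≤ x
      · have : (fun ω => min (s:ℝ) (τ ω)) ⁻¹' Iic x = univ := by
          ext ω
          simp only [mem_preimage, mem_Iic, mem_univ, iff_true]
          exact le_trans (min_le_left _ _) hx
        rw [this]
        exact MeasurableSet.univ
      · have hxset : (fun ω => min (s:ℝ) (τ ω)) ⁻¹' Iic x = {ω | τ ω ≤ x} := by
          ext ω
          simp only [mem_preimage, mem_Iic, min_le_iff, mem_setOf_eq]
          exact or_iff_right hx
        rw [hxset]
        by_cases hx0 : 0 ≤ x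
        · have hux : ((⟨x, hx0⟩ : ℝ≥0) : ℝ) = x := rfl
          have : ({ω | τ ω ≤ x} : Set Ω) = {ω | τ ω ≤ ((⟨x, hx0⟩ : ℝ≥0) : ℝ)} := by
            rw [hux]
          rw [this]
          exact hgenset s ⟨x, hx0⟩ (by
            exact NNReal.coe_le_coe.mp (not_le.mp hx).le)
        · have : ({ω | τ ω ≤ x} : Set Ω) = ∅ := by
            ext ω
            simp only [mem_setOf_eq, mem_empty_iff_false, iff_false, not_le]
            exact lt_of_lt_of_le (not_le.mp hx0) (hτ_nonneg ω)
          rw [this]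
          exact @MeasurableSet.empty Ω (ℱ s)
    have h2 : StronglyMeasurable[ℱ s] (fun ω => cumHaz lamE (min (s:ℝ) (τ ω))) :=
      Measurable.stronglyMeasurable ((cumHaz_continuous hcE).measurable.comp hmin)
    exact hind.sub h2
  refine ⟨fun s => hadapted s, fun i j hij => ?_⟩
  haveI : SigmaFinite (μ.trim (ℱ.le i)) := by infer_instance
  refine (MeasureTheory.ae_eq_condExp_of_forall_setIntegral_eq (ℱ.le i) (hint j)
    (fun A hA hμA => (hint i).integrableOn) ?_
    ((hadapted i).aestronglyMeasurable)).symm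
  intro A hA _
  -- π-system induction
  have key : ∀ ⦃B : Set Ω⦄, MeasurableSet[ℱ i] B →
      (∫ ω in B, M i ω ∂μ = ∫ ω in B, M j ω ∂μ) := by
    refine MeasurableSpace.induction_on_inter (m := ℱ i) (hgen i) (hπ i) ?_ ?_ ?_ ?_
    · simp
    · rintro B ⟨u, hu, rfl⟩
      refine MeasureTheory.setIntegral_congr_fun
        (measurableSet_le hτ_meas measurable_const) (fun ω hω => ?_)
      have h1 : τ ω ≤ (i:ℝ) := le_trans hω (NNReal.coe_le_coe.mpr hu)
      have h2 : τ ω ≤ (j:ℝ) := le_trans h1 (NNReal.coe_le_coe.mpr hij)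
      rw [hMalt, hMalt, if_pos h1, if_pos h2, min_eq_right h1, min_eq_right h2]
    · intro B hBm hB
      have hB0 : MeasurableSet B := ℱ.le i _ hBm
      have h1 := MeasureTheory.integral_add_compl hB0 (hint i)
      have h2 := MeasureTheory.integral_add_compl hB0 (hint j)
      have h3 := hmean i
      have h4 := hmean j
      linarith
    · intro f hdisj hfm hf
      rw [MeasureTheory.integral_iUnion (fun n => ℱ.le i _ (hfm n)) hdisj
          (hint i).integrableOn,
        MeasureTheory.integral_iUnion (fun n => ℱ.le i _ (hfm n)) hdisj
          (hint j).integrableOn]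
      exact tsum_congr hf
  exact key hA
end

section
/- Let λ : [0,∞) → [0,∞) be continuous with cumulative hazard Λ(t) = ∫_0^t λ(s) ds, and let τ be a nonnegative random variable on a probability space (Ω, F, P) with survival function P(τ > t) = exp(−Λ(t)) for all t ≥ 0. Let (H_t) be the natural filtration of the default process D_t = 1_{τ ≤ t}. Then for all 0 ≤ t ≤ u, almost surely E[1_{τ > u} | H_t] = 1_{τ > t} · exp(−(Λ(u) − Λ(t))). -/
open MeasureTheory Filter Set intervalIntegral
open scoped NNReal

/-- With hazard rate `lam`, cumulative hazard `Λ t = ∫_0^t lam s ds`,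
default time `τ ≥ 0` with survival function `P(τ > t) = exp(-Λ t)`, and `(H_t)` the
natural filtration of the default process `D t = 1_{τ ≤ t}`, for all `0 ≤ t ≤ u`,
`E[1_{τ > u} | H_t] = 1_{τ > t} · exp(-(Λ u - Λ t))` almost surely. -/
theorem conditional_survival_probability
    {Ω : Type*} [MeasurableSpace Ω] (μ : Measure Ω) [IsProbabilityMeasure μ]
    (lam : ℝ → ℝ)
    (hlam_cont : ContinuousOn lam (Set.Ici (0:ℝ)))
    (hlam_nonneg : ∀ s : ℝ, 0 ≤ s → 0 ≤ lam s)
    (τ : Ω → ℝ) (hτ_meas : Measurable τ) (hτ_nonneg : ∀ ω, 0 ≤ τ ω)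
    (hsurv : ∀ t : ℝ, 0 ≤ t →
      μ {ω | t < τ ω} = ENNReal.ofReal (Real.exp (-∫ s in (0:ℝ)..t, lam s)))
    (D : ℝ≥0 → Ω → ℝ)
    (hD : ∀ (t : ℝ≥0) (ω : Ω), D t ω = if τ ω ≤ (t : ℝ) then 1 else 0)
    (hD_meas : ∀ t : ℝ≥0, StronglyMeasurable (D t))
    (t u : ℝ≥0) (htu : t ≤ u) :
    μ[(fun ω => if (u : ℝ) < τ ω then (1:ℝ) else 0) | (Filtration.natural D hD_meas) t]
      =ᵐ[μ] fun ω => (if (t : ℝ) < τ ω then (1:ℝ) else 0) *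
        Real.exp (-((∫ s in (0:ℝ)..(u:ℝ), lam s) - ∫ s in (0:ℝ)..(t:ℝ), lam s)) := by
  have hm := (Filtration.natural D hD_meas).le t
  haveI : SigmaFinite (μ.trim hm) := by infer_instance
  set Λt : ℝ := ∫ s in (0:ℝ)..(t:ℝ), lam s with hΛt
  set Λu : ℝ := ∫ s in (0:ℝ)..(u:ℝ), lam s with hΛu
  set c : ℝ := Real.exp (-(Λu - Λt)) with hc
  set S : Set Ω := {ω | (t:ℝ) < τ ω} with hS_def
  set U : Set Ω := {ω | (u:ℝ) < τ ω} with hU_def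
  have htu' : (t:ℝ) ≤ (u:ℝ) := by exact_mod_cast htu
  have hUS : U ⊆ S := fun ω h => lt_of_le_of_lt htu' h
  have hU_meas : MeasurableSet U := measurableSet_lt measurable_const hτ_meas
  have hS_meas0 : MeasurableSet S := measurableSet_lt measurable_const hτ_meas
  -- S is measurable w.r.t. the filtration at time t
  have hS_m : MeasurableSet[(Filtration.natural D hD_meas) t] S := by
    have h1 : MeasurableSet[MeasurableSpace.comap (D t) inferInstance] S := by
      refine ⟨{0}, measurableSet_singleton 0, ?_⟩
      ext ω
      simp only [Set.mem_preimage, Set.mem_singleton_iff, hD, hS_def, Set.mem_setOf_eq]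
      split_ifs with h
      · simp [not_lt.mpr h]
      · simp [not_le.mp h]
    have h2 : MeasurableSpace.comap (D t) inferInstance
        ≤ (Filtration.natural D hD_meas) t :=
      le_iSup₂ (f := fun j (_ : j ≤ t) => MeasurableSpace.comap (D j) inferInstance) t le_rfl
    exact h2 _ h1
  -- every set in the filtration at time t either contains S or is disjoint from S
  have hP : ∀ A : Set Ω, MeasurableSet[(Filtration.natural D hD_meas) t] A →
      (S ⊆ A ∨ A ∩ S = ∅) := by
    intro A hA
    let m' : MeasurableSpace Ω :=
      { MeasurableSet' := fun B => S ⊆ B ∨ B ∩ S = ∅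
        measurableSet_empty := Or.inr (by simp)
        measurableSet_compl := by
          rintro B (hB | hB)
          · refine Or.inr ?_
            rw [Set.inter_comm, ← Set.diff_eq, Set.diff_eq_empty]
            exact hB
          · refine Or.inl fun ω hω => ?_
            intro hωB
            exact Set.notMem_empty ω (hB ▸ ⟨hωB, hω⟩)
        measurableSet_iUnion := by
          intro f hf
          by_cases h : ∃ i, S ⊆ f i
          · obtain ⟨i, hi⟩ := h
            exact Or.inl (hi.trans (Set.subset_iUnion f i))
          · push_neg at h
            refine Or.inr ?_
            rw [Set.iUnion_inter]
            simp only [Set.iUnion_eq_empty]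
            intro i
            rcases hf i with hi | hi
            · exact absurd hi (h i)
            · exact hi }
    have hle : (Filtration.natural D hD_meas) t ≤ m' := by
      refine iSup₂_le fun j hj => ?_
      rintro A ⟨s, _, rfl⟩
      by_cases h0 : (0:ℝ) ∈ s
      · refine Or.inl fun ω hω => ?_
        have hDj : D j ω = 0 := by
          rw [hD]
          have : ¬ τ ω ≤ (j:ℝ) := not_le.mpr
            (lt_of_le_of_lt (show (j:ℝ) ≤ (t:ℝ) by exact_mod_cast hj) hω)
          simp [this]
        simp only [Set.mem_preimage, hDj]
        exact h0
      · refine Or.inr ?_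
        ext ω
        simp only [Set.mem_inter_iff, Set.mem_preimage, Set.mem_empty_iff_false, iff_false,
          not_and]
        intro hωs hωS
        have hDj : D j ω = 0 := by
          rw [hD]
          have : ¬ τ ω ≤ (j:ℝ) := not_le.mpr
            (lt_of_le_of_lt (show (j:ℝ) ≤ (t:ℝ) by exact_mod_cast hj) hωS)
          simp [this]
        exact h0 (hDj ▸ hωs)
    exact hle A hA
  have hf_int : Integrable (fun ω => if (u : ℝ) < τ ω then (1:ℝ) else 0) μ := by
    have : (fun ω => if (u : ℝ) < τ ω then (1:ℝ) else 0)
        = U.indicator (fun _ => (1:ℝ)) := by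
      funext ω; simp [Set.indicator_apply, hU_def]
    rw [this]; exact (integrable_const 1).indicator hU_meas
  have hg_int : Integrable (fun ω => (if (t : ℝ) < τ ω then (1:ℝ) else 0) * c) μ := by
    have : (fun ω => (if (t : ℝ) < τ ω then (1:ℝ) else 0) * c)
        = fun ω => S.indicator (fun _ => (1:ℝ)) ω * c := by
      funext ω; simp [Set.indicator_apply, hS_def]
    rw [this]; exact ((integrable_const 1).indicator hS_meas0).mul_const c
  -- set-integral computations
  have hintf : ∀ A : Set Ω, MeasurableSet A →
      ∫ x in A, (if (u : ℝ) < τ x then (1:ℝ) else 0) ∂μ = (μ (A ∩ U)).toReal := by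
    intro A hA
    have h1 : ∫ x in A, U.indicator (fun _ => (1:ℝ)) x ∂μ
        = (μ.restrict A U).toReal • (1:ℝ) := integral_indicator_const (1:ℝ) hU_meas
    simp only [Set.indicator_apply, hU_def, Set.mem_setOf_eq, smul_eq_mul, mul_one,
      Measure.restrict_apply hU_meas] at h1
    rw [Set.inter_comm A U]
    exact h1.trans (congrArg ENNReal.toReal (Measure.restrict_apply hU_meas))
  have hintg : ∀ A : Set Ω, MeasurableSet A →
      ∫ x in A, (if (t : ℝ) < τ x then (1:ℝ) else 0) * c ∂μ = (μ (A ∩ S)).toReal * c := by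
    intro A hA
    rw [MeasureTheory.integral_mul_const]
    have h1 : ∫ x in A, S.indicator (fun _ => (1:ℝ)) x ∂μ
        = (μ.restrict A S).toReal • (1:ℝ) := integral_indicator_const (1:ℝ) hS_meas0
    simp only [Set.indicator_apply, hS_def, Set.mem_setOf_eq, smul_eq_mul, mul_one,
      Measure.restrict_apply hS_meas0] at h1
    rw [Set.inter_comm A S, h1]
    exact congrArg (fun x => ENNReal.toReal x * c) (Measure.restrict_apply hS_meas0)
  -- survival values
  have hμU : (μ U).toReal = Real.exp (-Λu) := by
    rw [hU_def, hsurv (u:ℝ) u.coe_nonneg, ENNReal.toReal_ofReal (Real.exp_nonneg _)]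
  have hμS : (μ S).toReal = Real.exp (-Λt) := by
    rw [hS_def, hsurv (t:ℝ) t.coe_nonneg, ENNReal.toReal_ofReal (Real.exp_nonneg _)]
  refine (ae_eq_condExp_of_forall_setIntegral_eq hm hf_int
    (fun A hA _ => hg_int.integrableOn)
    (fun A hA _ => ?_) ?_).symm
  · -- set integrals agree
    have hA0 : MeasurableSet A := hm A hA
    rw [hintf A hA0, hintg A hA0]
    rcases hP A hA with h | h
    · have hAS : A ∩ S = S := Set.inter_eq_self_of_subset_right h
      have hAU : A ∩ U = U := Set.inter_eq_self_of_subset_right (hUS.trans h)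
      rw [hAS, hAU, hμU, hμS, hc, ← Real.exp_add]
      congr 1
      ring
    · have hAU : A ∩ U = ∅ := Set.eq_empty_of_subset_empty
        (h ▸ Set.inter_subset_inter_right A hUS)
      rw [h, hAU]
      simp
  · -- strong measurability w.r.t. the filtration at time t
    refine StronglyMeasurable.aestronglyMeasurable ?_
    have h1 : StronglyMeasurable[(Filtration.natural D hD_meas) t]
        (S.indicator (fun _ => (1:ℝ))) := stronglyMeasurable_const.indicator hS_m
    have h2 := h1.mul (stronglyMeasurable_const (b := c))
    have h3 : (fun ω => (if (t : ℝ) < τ ω then (1:ℝ) else 0) * c)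
        = fun ω => S.indicator (fun _ => (1:ℝ)) ω * c := by
      funext ω; simp [Set.indicator_apply, hS_def]
    rw [h3]
    exact h2
end
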